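/- Let T₂ : (ℂ \ {0})³ → (ℂ \ {0})³ be the map T₂(x,y,z) = (x·y·z⁻¹, z, y), and let P(x,y,z) be the antisymmetric 3×3 matrix with entries P₁₂ = −(1/2)·(y − z)·z, P₁₃ = (1/2)·(y − z)·z, P₂₃ = 0 (and Pⱼᵢ = −Pᵢⱼ, Pᵢᵢ = 0). Let J(x,y,z) denote the Jacobian matrix of T₂, namely J = [[y·z⁻¹, x·z⁻¹, −x·y·z⁻²],[0,0,1],[0,1,0]]. Then the Poisson structure defined by P is invariant under T₂: for all (x,y,z) ∈ (ℂ \ {0})³, J(x,y,z) · P(x,y,z) · J(x,y,z)ᵀ = P(T₂(x,y,z)). Moreover C̃₁(x,y,z) = y + z satisfies C̃₁ ∘ T₂ = C̃₁ and is a Casimir of P (its gradient lies in the kernel of P at every point), and Ĩ₁(x,y,z) = z⁻¹·x satisfies Ĩ₁ ∘ T₂ = Ĩ₁. -/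
import Mathlib


noncomputable section

section Tetra

variable {X : Type*}

/-- `T` acting on factors 1,2,3 of `X⁶`. -/
def lift123 (T : X × X × X → X × X × X) :
    X × X × X × X × X × X → X × X × X × X × X × X
  | (a, b, c, d, e, f) =>
    match T (a, b, c) with
    | (a', b', c') => (a', b', c', d, e, f)

/-- `T` acting on factors 1,4,5 of `X⁶`. -/
def lift145 (T : X × X × X → X × X × X) :
    X × X × X × X × X × X → X × X × X × X × X × X
  | (a, b, c, d, e, f) =>
    match T (a, d, e) with
    | (a', d', e') => (a', b, c, d', e', f)

/-- `T` acting on factors 2,4,6 of `X⁶`. -/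
def lift246 (T : X × X × X → X × X × X) :
    X × X × X × X × X × X → X × X × X × X × X × X
  | (a, b, c, d, e, f) =>
    match T (b, d, f) with
    | (b', d', f') => (a, b', c, d', e, f')

/-- `T` acting on factors 3,5,6 of `X⁶`. -/
def lift356 (T : X × X × X → X × X × X) :
    X × X × X × X × X × X → X × X × X × X × X × X
  | (a, b, c, d, e, f) =>
    match T (c, e, f) with
    | (c', e', f') => (a, b, c', d, e', f')

/-- The Zamolodchikov tetrahedron equation for a map `T : X³ → X³`. -/
def IsTetrahedronMap (T : X × X × X → X × X × X) : Prop :=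
  lift123 T ∘ lift145 T ∘ lift246 T ∘ lift356 T =
    lift356 T ∘ lift246 T ∘ lift145 T ∘ lift123 T

end Tetra

open Matrix

def T2 : ℂˣ × ℂˣ × ℂˣ → ℂˣ × ℂˣ × ℂˣ := fun (x, y, z) => (x * y * z⁻¹, z, y)

/-- The antisymmetric Poisson structure matrix with
`P₁₂ = −(1/2)·(y − z)·z`, `P₁₃ = (1/2)·(y − z)·z`, `P₂₃ = 0`. -/
def P (_x y z : ℂ) : Matrix (Fin 3) (Fin 3) ℂ :=
  !![0, -((1/2) * (y - z) * z), (1/2) * (y - z) * z;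
     (1/2) * (y - z) * z, 0, 0;
     -((1/2) * (y - z) * z), 0, 0]

/-- The Jacobian matrix of `T₂(x,y,z) = (x·y·z⁻¹, z, y)`. -/
def J (x y z : ℂ) : Matrix (Fin 3) (Fin 3) ℂ :=
  !![y / z, x / z, -(x * y / z ^ 2);
     0, 0, 1;
     0, 1, 0]

/-- `C̃₁(x,y,z) = y + z`. -/
def C1t : ℂˣ × ℂˣ × ℂˣ → ℂ := fun (_, y, z) => (y : ℂ) + (z : ℂ)

/-- `Ĩ₁(x,y,z) = z⁻¹·x`. -/
def I1t : ℂˣ × ℂˣ × ℂˣ → ℂ := fun (x, _, z) => (z : ℂ)⁻¹ * (x : ℂ)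

lemma Jt_eq (x y z : ℂ) : (J x y z)ᵀ =
    !![y / z, 0, 0; x / z, 0, 1; -(x * y / z ^ 2), 1, 0] := by
  ext i j; fin_cases i <;> fin_cases j <;> rfl

set_option maxHeartbeats 2000000 in
theorem T2_Liouville_data :
    (∀ x y z : ℂˣ,
      J (x : ℂ) (y : ℂ) (z : ℂ) * P (x : ℂ) (y : ℂ) (z : ℂ) *
          (J (x : ℂ) (y : ℂ) (z : ℂ))ᵀ =
        P (((x * y * z⁻¹ : ℂˣ)) : ℂ) ((z : ℂˣ) : ℂ) ((y : ℂˣ) : ℂ)) ∧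
    (C1t ∘ T2 = C1t) ∧
    (∀ x y z : ℂˣ, P (x : ℂ) (y : ℂ) (z : ℂ) *ᵥ ![0, 1, 1] = 0) ∧
    (I1t ∘ T2 = I1t) := by
  refine ⟨?_, ?_, ?_, ?_⟩
  · intro x y z
    have hz : (z : ℂ) ≠ 0 := z.ne_zero
    ext i j
    rw [Jt_eq]
    fin_cases i <;> fin_cases j <;>
      simp [_root_.J, _root_.P, Matrix.mul_apply, Fin.sum_univ_three, Units.val_mul,
        Matrix.vecHead, Matrix.vecTail] <;>
      field_simp <;> ring
  · funext p
    obtain ⟨x, y, z⟩ := p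
    simp [C1t, T2]
    ring
  · intro x y z
    ext i
    fin_cases i <;>
      simp [_root_.P, Matrix.mulVec, dotProduct, Fin.sum_univ_three]
  · funext p
    obtain ⟨x, y, z⟩ := p
    have hz : (z : ℂ) ≠ 0 := z.ne_zero
    have hy : (y : ℂ) ≠ 0 := y.ne_zero
    simp [I1t, T2, Units.val_mul]
    field_simp
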